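/- Let M be a binary matroid and let k ≥ h ≥ 1 be integers. Then there exists X ⊆ E(M) with |X| ≤ k and r(M) − r(M − X) ≥ h if and only if there exist disjoint sets F, T ⊆ E(M) with |T| = h, |F| ≤ k − h, and T ⊆ span_{M*}(F). -/

import Mathlib

open Set

variable {α : Type*}

/-- A circuit of a matroid: an inclusion-minimal dependent set. -/
def MCircuit (M : Matroid α) (C : Set α) : Prop :=
  M.Dep C ∧ ∀ C' ⊂ C, M.Indep C'

/-- A binary matroid: one representable over GF(2). -/
def IsBinary (M : Matroid α) : Prop :=
  ∃ (n : ℕ) (φ : α → (Fin n → ZMod 2)),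
    ∀ I ⊆ M.E, (M.Indep I ↔ LinearIndependent (ZMod 2) (fun x : I => φ x))

/-- A cycle of a matroid: a (possibly empty) disjoint union of circuits. -/
def MCycle (M : Matroid α) (C : Set α) : Prop :=
  ∃ 𝒞 : Set (Set α), (∀ D ∈ 𝒞, MCircuit M D) ∧ 𝒞.Pairwise Disjoint ∧ C = ⋃₀ 𝒞

/-- Deletion of a set of elements from a matroid. -/
def MDelete (M : Matroid α) (D : Set α) : Matroid α := M.restrict (M.E \ D)

/-- The rank of a matroid: the supremum of sizes of independent sets. -/
noncomputable def mRank (M : Matroid α) : ℕ := sSup (Set.ncard '' {I | M.Indep I})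

section Aux

open Matroid

variable {M : Matroid α}

/-- A binary matroid has all independent sets finite, of uniformly bounded size. -/
lemma binary_indep_finite_bdd (hM : IsBinary M) :
    ∃ n : ℕ, ∀ I, M.Indep I → I.Finite ∧ I.ncard ≤ n := by
  obtain ⟨n, φ, hφ⟩ := hM
  refine ⟨Nat.card (Fin n → ZMod 2), fun I hI => ?_⟩
  have hli := (hφ I hI.subset_ground).mp hI
  have hinj : Function.Injective (fun x : I => φ x) := hli.injective
  have hfin : Finite I := Finite.of_injective _ hinj
  refine ⟨Set.finite_coe_iff.mp hfin, ?_⟩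
  rw [← Nat.card_coe_set_eq]
  exact Nat.card_le_card_of_injective _ hinj

/-- If all independent sets are finite of bounded size, `mRank` equals the
cardinality of any base. -/
lemma mRank_eq_ncard_base {n : ℕ} (hfin : ∀ I, M.Indep I → I.Finite ∧ I.ncard ≤ n)
    {B : Set α} (hB : M.IsBase B) : mRank M = B.ncard := by
  apply le_antisymm
  · refine csSup_le ⟨0, ⟨∅, M.empty_indep, by simp⟩⟩ ?_
    rintro m ⟨I, hI, rfl⟩
    obtain ⟨B₂, hB₂, hIB₂⟩ := hI.exists_isBase_superset
    calc I.ncard ≤ B₂.ncard := Set.ncard_le_ncard hIB₂ (hfin _ hB₂.indep).1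
      _ = B.ncard := hB₂.ncard_eq_ncard_of_isBase hB
  · exact le_csSup ⟨n, by rintro m ⟨I, hI, rfl⟩; exact (hfin _ hI).2⟩ ⟨B, hB.indep, rfl⟩

lemma mRank_ge_ncard_indep {n : ℕ} (hfin : ∀ I, M.Indep I → I.Finite ∧ I.ncard ≤ n)
    {I : Set α} (hI : M.Indep I) : I.ncard ≤ mRank M :=
  le_csSup ⟨n, by rintro m ⟨J, hJ, rfl⟩; exact (hfin _ hJ).2⟩ ⟨I, hI, rfl⟩

/-- If `t` lies in the dual closure of `F`, then `t` is not spanned by the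
complement of `F ∪ {t}`. -/
lemma not_mem_closure_compl_of_mem_dual_closure {F : Set α} {t : α}
    (hF : F ⊆ M.E) (htE : t ∈ M.E) (htF : t ∉ F) (ht : t ∈ M✶.closure F) :
    t ∉ M.closure (M.E \ insert t F) := by
  intro htc
  obtain ⟨J, hJ⟩ := M✶.exists_isBasis F (by rwa [dual_ground])
  have htJ : t ∉ J := fun h => htF (hJ.subset h)
  have hdep : M✶.Dep (insert t J) := by
    rw [← hJ.closure_eq_closure] at ht
    exact (hJ.indep.mem_closure_iff_of_notMem htJ).mp ht
  obtain ⟨hJE, B₀, hB₀, hdisj⟩ := dual_indep_iff_exists'.mp hJ.indep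
  set S := (B₀ \ {t}) ∪ (M.E \ insert t F) with hS
  have hSE : S ⊆ M.E := union_subset (diff_subset.trans hB₀.subset_ground) diff_subset
  have hB₀S : B₀ ⊆ M.closure S := by
    intro x hx
    by_cases hxt : x = t
    · exact hxt ▸ (M.closure_subset_closure subset_union_right htc)
    · exact M.subset_closure S hSE (Or.inl ⟨hx, hxt⟩)
  have hsp : M.Spanning S := by
    rw [spanning_iff_closure_eq hSE]
    refine subset_antisymm (M.closure_subset_ground S) ?_
    have h2 := M.closure_subset_closure_of_subset_closure hB₀S
    rwa [hB₀.closure_eq] at h2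
  obtain ⟨B₁, hB₁, hB₁S⟩ := hsp.exists_isBase_subset
  refine hdep.not_indep (dual_indep_iff_exists'.mpr
    ⟨insert_subset htE hJE, B₁, hB₁, ?_⟩)
  refine Set.disjoint_left.mpr fun x hx hxB₁ => ?_
  have hxS := hB₁S hxB₁
  rcases hx with rfl | hxJ
  · rcases hxS with ⟨-, hne⟩ | ⟨-, hni⟩
    · exact hne rfl
    · exact hni (mem_insert _ _)
  · rcases hxS with ⟨hmem, -⟩ | ⟨-, hni⟩
    · exact Set.disjoint_left.mp hdisj hxJ hmem
    · exact hni (mem_insert_of_mem _ (hJ.subset hxJ))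

end Aux

theorem rank_reduction_iff_space_cover_dual (M : Matroid α) (hM : IsBinary M)
    (h k : ℕ) (hh : 1 ≤ h) (hk : h ≤ k) :
    (∃ X ⊆ M.E, X.ncard ≤ k ∧ h ≤ mRank M - mRank (MDelete M X)) ↔
      (∃ F T : Set α, F ⊆ M.E ∧ T ⊆ M.E ∧ Disjoint F T ∧ T.ncard = h ∧
        F.ncard ≤ k - h ∧ T ⊆ M✶.closure F) := by
  obtain ⟨n, hfin⟩ := binary_indep_finite_bdd hM
  constructor
  · rintro ⟨X, hXE, hXk, hXh⟩
    have hfin' : ∀ I, (M.restrict (M.E \ X)).Indep I → I.Finite ∧ I.ncard ≤ n :=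
      fun I hI => hfin I (Matroid.restrict_indep_iff.mp hI).1
    obtain ⟨B', hB'⟩ := M.exists_isBasis (M.E \ X) diff_subset
    obtain ⟨B, hB, hB'B⟩ := hB'.indep.exists_isBase_superset
    have hB'base : (M.restrict (M.E \ X)).IsBase B' := (Matroid.isBase_restrict_iff diff_subset).mpr hB'
    have hr : mRank M = B.ncard := mRank_eq_ncard_base hfin hB
    have hr' : mRank (MDelete M X) = B'.ncard := mRank_eq_ncard_base hfin' hB'base
    have hBfin := (hfin _ hB.indep).1
    have hsub : B \ B' ⊆ X := by
      rintro e ⟨heB, heB'⟩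
      by_contra heX
      exact (hB'.insert_dep ⟨⟨hB.subset_ground heB, heX⟩, heB'⟩).not_indep
        (hB.indep.subset (insert_subset heB hB'B))
    have hcard : h ≤ (B \ B').ncard := by
      have hB'fin := (hfin _ hB'.indep).1
      rw [Set.ncard_diff hB'B hB'fin]
      rw [hr, hr'] at hXh
      exact hXh
    obtain ⟨T, hTsub, hTcard⟩ := Set.exists_subset_card_eq hcard
    have hTX : T ⊆ X := hTsub.trans hsub
    have hTfin : T.Finite := hBfin.subset (hTsub.trans diff_subset)
    refine ⟨X \ T, T, diff_subset.trans hXE, hTX.trans hXE, disjoint_sdiff_left, hTcard, ?_, ?_⟩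
    · by_cases hXfin : X.Finite
      · rw [Set.ncard_diff hTX hTfin, hTcard]
        exact Nat.sub_le_sub_right hXk h
      · rw [Set.Infinite.ncard (Set.Infinite.diff hXfin hTfin)]
        exact Nat.zero_le _
    · intro t htT
      have htB : t ∈ B \ B' := hTsub htT
      have htE : t ∈ M.E := hB.subset_ground htB.1
      set J : Set α := X \ (B ∪ T) with hJdef
      have hJF : J ⊆ X \ T := fun x hx => ⟨hx.1, fun hxT => hx.2 (Or.inr hxT)⟩
      have hJindep : M✶.Indep J := hB.compl_isBase_dual.indep.subset
        (fun x hx => ⟨hXE hx.1, fun hxB => hx.2 (Or.inl hxB)⟩)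
      have htJ : t ∉ J := fun hx => hx.2 (Or.inr htT)
      have hdep : M✶.Dep (insert t J) := by
        rw [Matroid.dep_iff]
        constructor
        · intro hind
          obtain ⟨-, B₁, hB₁, hdisj⟩ := Matroid.dual_indep_iff_exists'.mp hind
          have htcl : t ∉ M.closure (B \ {t}) :=
            hB.indep.notMem_closure_diff_of_mem htB.1
          apply htcl
          have hB₁sub : B₁ ⊆ M.closure (B \ {t}) := by
            intro x hxB₁
            have hxE : x ∈ M.E := hB₁.subset_ground hxB₁
            have hxJ : x ∉ J := fun hxx =>
              Set.disjoint_left.mp hdisj (mem_insert_of_mem _ hxx) hxB₁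
            have hxt : x ≠ t := fun hxx =>
              Set.disjoint_left.mp hdisj (hxx ▸ mem_insert _ _) hxB₁
            by_cases hxX : x ∈ X
            · have hxBT : x ∈ B ∪ T := by
                by_contra hn; exact hxJ ⟨hxX, hn⟩
              have hxB : x ∈ B := hxBT.elim id (fun hxT => (hTsub hxT).1)
              exact M.subset_closure _ (diff_subset.trans hB.subset_ground) ⟨hxB, hxt⟩
            · have hx' : x ∈ M.closure B' := hB'.subset_closure ⟨hxE, hxX⟩
              have hsubB : B' ⊆ B \ {t} :=
                fun y hy => ⟨hB'B hy, fun hyy => htB.2 (hyy ▸ hy)⟩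
              exact M.closure_subset_closure hsubB hx'
          have h2 := M.closure_subset_closure_of_subset_closure hB₁sub
          rw [hB₁.closure_eq] at h2
          exact h2 htE
        · exact insert_subset htE (fun x hx => hXE hx.1)
      have ht' : t ∈ M✶.closure J := (hJindep.mem_closure_iff_of_notMem htJ).mpr hdep
      exact M✶.closure_subset_closure hJF ht'
  · rintro ⟨F, T, hFE, hTE, hFT, hTcard, hFk, hTcl⟩
    have hTfin : T.Finite := by
      by_contra hinf
      rw [Set.Infinite.ncard hinf] at hTcard
      omega
    set X := F ∪ T with hX
    have hXE : X ⊆ M.E := union_subset hFE hTE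
    refine ⟨X, hXE, ?_, ?_⟩
    · by_cases hFfin : F.Finite
      · calc X.ncard ≤ F.ncard + T.ncard := Set.ncard_union_le F T
          _ ≤ (k - h) + h := add_le_add hFk (le_of_eq hTcard)
          _ ≤ k := by omega
      · rw [Set.Infinite.ncard (fun hXf => hFfin (hXf.subset subset_union_left))]
        exact Nat.zero_le _
    · obtain ⟨B', hB'⟩ := M.exists_isBasis (M.E \ X) diff_subset
      have hBT : M.Indep (B' ∪ T) := by
        refine Set.Finite.induction_on_subset (motive := fun s _ => M.Indep (B' ∪ s)) T hTfin ?_ ?_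
        · simpa using hB'.indep
        · rintro a s haT hsT has hind
          rw [Set.union_insert]
          have haB' : a ∉ B' ∪ s := by
            rintro (hmem | hmem)
            · exact (hB'.subset hmem).2 (Or.inr haT)
            · exact has hmem
          rw [hind.insert_indep_iff_of_notMem haB']
          refine ⟨hTE haT, fun hmem => ?_⟩
          have hacl := not_mem_closure_compl_of_mem_dual_closure hFE (hTE haT)
            (Set.disjoint_right.mp hFT haT) (hTcl haT)
          apply hacl
          refine M.closure_subset_closure ?_ hmem
          rintro x (hx | hx)
          · obtain ⟨hxE, hxX⟩ := hB'.subset hx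
            exact ⟨hxE, fun hmem2 => hxX (hmem2.elim
              (fun hxa => hxa ▸ Or.inr haT) (fun hxF => Or.inl hxF))⟩
          · refine ⟨hTE (hsT hx), fun hmem2 => ?_⟩
            rcases hmem2 with rfl | hxF
            · exact has hx
            · exact Set.disjoint_left.mp hFT hxF (hsT hx)
      have hB'fin := (hfin _ hB'.indep).1
      have hdisjBT : Disjoint B' T :=
        Set.disjoint_left.mpr fun x hx hxT => (hB'.subset hx).2 (Or.inr hxT)
      have hcardBT : (B' ∪ T).ncard = B'.ncard + h := by
        rw [Set.ncard_union_eq hdisjBT hB'fin hTfin, hTcard]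
      have hr' : mRank (MDelete M X) = B'.ncard :=
        mRank_eq_ncard_base (fun I hI => hfin I (Matroid.restrict_indep_iff.mp hI).1)
          ((Matroid.isBase_restrict_iff diff_subset).mpr hB')
      have hle : B'.ncard + h ≤ mRank M := by
        rw [← hcardBT]
        exact mRank_ge_ncard_indep hfin hBT
      rw [hr']
      omega
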